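/- There exists a Polish Aronszajn tree (a metric ω₁-tree with separable levels and empty inverse limit) which has an ε-branch for every ε > 0 but has no branch. Concretely: given a special Aronszajn tree T₀ (in the classical discrete sense), let X_α be the disjoint union of countably many copies of the α-th level of T₀ with the metric in which the n-th copy has diameter 1/n and distinct copies are at distance 1; with the natural projection maps this Polish ω₁-tree contains a 1/n-branch for every n but no cofinal branch. -/

import Mathlib

open Ordinal

/-- The set of countable ordinals, i.e. ordinals below `ω₁`. -/
def Omega1 : Type _ := {o : Ordinal // o < ω₁}

noncomputable instance : LinearOrder Omega1 := Subtype.instLinearOrder _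

/-- A metric ω₁-tree: a family of complete metric spaces `X α` for `α < ω₁` together with
commuting contractive surjective projections `π : X β → X α` for `α ≤ β`. -/
structure MetricOmega1Tree where
  X : Omega1 → Type
  met : ∀ α, MetricSpace (X α)
  complete : ∀ α, @CompleteSpace (X α) (met α).toUniformSpace
  proj : ∀ {α β : Omega1}, α ≤ β → X β → X α
  proj_surj : ∀ {α β : Omega1} (h : α ≤ β), Function.Surjective (proj h)
  proj_contr : ∀ {α β : Omega1} (h : α ≤ β) (x y : X β),
    (met α).dist (proj h x) (proj h y) ≤ (met β).dist x y
  proj_comm : ∀ {α β γ : Omega1} (hαβ : α ≤ β) (hβγ : β ≤ γ) (x : X γ),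
    proj hαβ (proj hβγ x) = proj (hαβ.trans hβγ) x
  proj_id : ∀ (α : Omega1) (x : X α), proj (le_refl α) x = x

namespace MetricOmega1Tree

variable (T : MetricOmega1Tree)

/-- The map ρ on pairs of elements of the tree: the distance between the projections to the
minimum of the two levels. -/
noncomputable def rho {α β : Omega1} (x : T.X α) (y : T.X β) : ℝ :=
  (T.met (min α β)).dist (T.proj (min_le_left α β) x) (T.proj (min_le_right α β) y)

/-- An ε-branch of a metric ω₁-tree: a choice of a point on each level, any two of which are
at ρ-distance at most ε. -/
def IsEpsBranch (ε : ℝ) (x : ∀ α, T.X α) : Prop :=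
  ∀ α β : Omega1, T.rho (x α) (x β) ≤ ε

/-- A (cofinal) branch: an element of the inverse limit of the system. -/
def IsBranch (x : ∀ α, T.X α) : Prop :=
  ∀ {α β : Omega1} (h : α ≤ β), T.proj h (x β) = x α

/-- A subtree: a family of nonempty level sets closed under the projection maps. -/
structure IsSubtree (S : ∀ α, Set (T.X α)) : Prop where
  nonempty : ∀ α, (S α).Nonempty
  proj_mem : ∀ {α β : Omega1} (h : α ≤ β), ∀ x ∈ S β, T.proj h x ∈ S α

end MetricOmega1Tree


open Ordinal Order

namespace AronszajnAux

universe u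

/-- Index type of a level: ordinals below `o`. -/
abbrev Idx (o : Ordinal.{u}) : Type (u+1) := {γ : Ordinal // γ < o}

/-- Restriction of a level function to a lower level. -/
def res {o₁ o₂ : Ordinal} (h : o₁ ≤ o₂) (f : Idx o₂ → ℚ) : Idx o₁ → ℚ :=
  fun γ => f ⟨γ.1, lt_of_lt_of_le γ.2 h⟩

@[simp] lemma res_res {o₁ o₂ o₃ : Ordinal} (h₁ : o₁ ≤ o₂) (h₂ : o₂ ≤ o₃) (f : Idx o₃ → ℚ) :
    res h₁ (res h₂ f) = res (h₁.trans h₂) f := rfl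

@[simp] lemma res_refl {o : Ordinal} (f : Idx o → ℚ) : res (le_refl o) f = f := rfl

/-- `f` is bounded strictly below `q`, with room to spare. -/
def Room {o : Ordinal} (f : Idx o → ℚ) (q : ℚ) : Prop :=
  ∃ p, p < q ∧ ∀ γ, f γ < p

lemma Room.mono {o : Ordinal} {f : Idx o → ℚ} {q q' : ℚ} (h : Room f q) (hq : q ≤ q') :
    Room f q' := by obtain ⟨p, h1, h2⟩ := h; exact ⟨p, lt_of_lt_of_le h1 hq, h2⟩

lemma Room.res {o₁ o₂ : Ordinal} (h : o₁ ≤ o₂) {f : Idx o₂ → ℚ} {q : ℚ} (hf : Room f q) :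
    Room (res h f) q := by obtain ⟨p, h1, h2⟩ := hf; exact ⟨p, h1, fun γ => h2 _⟩

/-- One-step extension of a function on level `β` to level `succ β` with top value `r`. -/
noncomputable def ext1 {β : Ordinal} (f : Idx β → ℚ) (r : ℚ) : Idx (succ β) → ℚ :=
  fun γ => if h : γ.1 < β then f ⟨γ.1, h⟩ else r

@[simp] lemma res_ext1 {β : Ordinal} (f : Idx β → ℚ) (r : ℚ) :
    res (le_succ β) (ext1 f r) = f := by
  funext γ; simp [res, ext1, γ.2]

/-- Auxiliary increasing sequence of rationals strictly between `p` and `(p+q)/2`. -/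
def cseq (p q : ℚ) (n : ℕ) : ℚ := p + (q - p) * ((n + 1) / (2 * (n + 2)))

lemma cseq_pos0 {p q : ℚ} (h : p < q) : p < cseq p q 0 := by
  unfold cseq; nlinarith

lemma cseq_mono {p q : ℚ} (h : p < q) {m n : ℕ} (hmn : m ≤ n) : cseq p q m ≤ cseq p q n := by
  unfold cseq
  have h1 : ((m : ℚ) + 1) / (2 * (m + 2)) ≤ ((n : ℚ) + 1) / (2 * (n + 2)) := by
    rw [div_le_div_iff₀ (by positivity) (by positivity)]
    have : (m : ℚ) ≤ n := by exact_mod_cast hmn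
    nlinarith
  nlinarith

lemma cseq_lt_mid {p q : ℚ} (h : p < q) (n : ℕ) : cseq p q n < p + (q - p) / 2 := by
  unfold cseq
  have h1 : ((n : ℚ) + 1) / (2 * (n + 2)) < 1 / 2 := by
    rw [div_lt_div_iff₀ (by positivity) (by norm_num)]
    have : (0:ℚ) ≤ n := by positivity
    nlinarith
  nlinarith

lemma mid_lt {p q : ℚ} (h : p < q) : p + (q - p) / 2 < q := by nlinarith

lemma cseq_lt {p q : ℚ} (h : p < q) (n : ℕ) : cseq p q n < q :=
  (cseq_lt_mid h n).trans (mid_lt h)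

end AronszajnAux

namespace AronszajnAux

/-- A node of an ω-chain through the levels below a limit ordinal `o`. -/
structure ChainNode (o : Ordinal.{u}) : Type (u+1) where
  lev : Ordinal
  hlev : lev < o
  fn : Idx lev → ℚ

variable {o : Ordinal}

open Classical

/-- The ω-chain through the levels below `o`, starting at `start`, guided by the
enumeration `e` of the ordinals below `o`, with bounds `cseq p q n`. -/
noncomputable def chain (rec : ∀ γ < o, Set (Idx γ → ℚ)) (e : ℕ → Idx o)
    (start : ChainNode o) (p q : ℚ) : ℕ → ChainNode o
  | 0 => start
  | n + 1 =>
    let prev := chain rec e start p q n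
    let δ := max prev.lev (e n).1
    have hδ : δ < o := max_lt prev.hlev (e n).2
    have hle : prev.lev ≤ δ := le_max_left _ _
    if h : ∃ t, t ∈ rec δ hδ ∧ res hle t = prev.fn ∧ Room t (cseq p q (n + 1))
    then ⟨δ, hδ, h.choose⟩ else prev

open Classical in
/-- Glue an ω-chain into a function on level `o`. -/
noncomputable def glue (c : ℕ → ChainNode o) : Idx o → ℚ :=
  fun x => if h : ∃ n, x.1 < (c n).lev then (c (Nat.find h)).fn ⟨x.1, Nat.find_spec h⟩ else 0

/-- Level sets: zero level. -/
def Tzero : Set (Idx 0 → ℚ) := {fun _ => 0}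

/-- Level sets: successor level. -/
def Tsucc (β : Ordinal) (Tβ : Set (Idx β → ℚ)) : Set (Idx (succ β) → ℚ) :=
  {t | ∃ s ∈ Tβ, ∃ r : ℚ, (∀ γ, s γ < r) ∧ t = ext1 s r}

/-- A fixed surjective enumeration of the ordinals below a countable limit ordinal. -/
noncomputable def enumIio (o : Ordinal) (hω : o < ω₁) (ho : o ≠ 0) : ℕ → Idx o := by
  have hc : (Set.Iio o).Countable := by
    rw [Cardinal.countable_iff_lt_aleph_one, Ordinal.mk_Iio_ordinal]
    have h1 : o.card < Cardinal.aleph 1 := by rwa [← Cardinal.lt_ord, Cardinal.ord_aleph]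
    simpa using Cardinal.lift_lt.mpr h1
  have : Countable (Set.Iio o) := hc.to_subtype
  have hne : Nonempty (Set.Iio o) := ⟨⟨0, pos_iff_ne_zero.mpr ho⟩⟩
  exact fun n => (exists_surjective_nat (Set.Iio o)).choose n

lemma enumIio_surj (o : Ordinal) (hω : o < ω₁) (ho : o ≠ 0) :
    Function.Surjective (enumIio o hω ho) := by
  have hc : (Set.Iio o).Countable := by
    rw [Cardinal.countable_iff_lt_aleph_one, Ordinal.mk_Iio_ordinal]
    have h1 : o.card < Cardinal.aleph 1 := by rwa [← Cardinal.lt_ord, Cardinal.ord_aleph]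
    simpa using Cardinal.lift_lt.mpr h1
  have : Countable (Set.Iio o) := hc.to_subtype
  have hne : Nonempty (Set.Iio o) := ⟨⟨0, pos_iff_ne_zero.mpr ho⟩⟩
  exact (exists_surjective_nat (Set.Iio o)).choose_spec

/-- Level sets: limit level. -/
noncomputable def Tlim (o : Ordinal) (ho : Order.IsSuccLimit o) (rec : ∀ γ < o, Set (Idx γ → ℚ)) :
    Set (Idx o → ℚ) :=
  if hω : o < ω₁ then
    {u | ∃ (α : Ordinal) (hα : α < o) (s : Idx α → ℚ), s ∈ rec α hα ∧
      ∃ p q : ℚ, p < q ∧ Room s (cseq p q 0) ∧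
        u = glue (chain rec (enumIio o hω ho.ne_bot) ⟨α, hα, s⟩ p q)}
  else ∅

/-- The full system of levels of the classical Aronszajn tree of bounded strictly
increasing rational sequences. -/
noncomputable def Tlev : ∀ o : Ordinal, Set (Idx o → ℚ) := fun o =>
  limitRecOn (motive := fun o => Set (Idx o → ℚ)) o Tzero (fun β Tβ => Tsucc β Tβ)
    (fun o ho rec => Tlim o ho rec)

lemma Tlev_zero : Tlev 0 = Tzero := limitRecOn_zero ..

lemma Tlev_succ (β : Ordinal) : Tlev (succ β) = Tsucc β (Tlev β) := limitRecOn_succ ..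

lemma Tlev_limit (o : Ordinal) (ho : Order.IsSuccLimit o) :
    Tlev o = Tlim o ho (fun γ _ => Tlev γ) := limitRecOn_limit ..

end AronszajnAux

namespace AronszajnAux

/-- The inductive invariant of the construction. -/
def Inv (o : Ordinal) : Prop :=
  (Tlev o).Countable ∧
  (∀ s ∈ Tlev o, StrictMono s) ∧
  (∀ s ∈ Tlev o, ∃ p : ℚ, ∀ γ, s γ < p) ∧
  (∀ (γ : Ordinal) (h : γ ≤ o), ∀ s ∈ Tlev o, res h s ∈ Tlev γ) ∧
  (∀ (γ : Ordinal) (h : γ ≤ o), ∀ s ∈ Tlev γ, ∀ q : ℚ, Room s q →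
    ∃ t ∈ Tlev o, res h t = s ∧ Room t q)

section Chain

variable {o : Ordinal} (hIH : ∀ γ, γ < o → Inv γ) (e : ℕ → Idx o)
  {α : Ordinal} (hα : α < o) (s : Idx α → ℚ) (p q : ℚ)
  (hs : s ∈ Tlev α) (hpq : p < q) (hr : Room s (cseq p q 0))

/-- The chain through the tree `Tlev`. -/
noncomputable abbrev ch (n : ℕ) : ChainNode o :=
  chain (fun γ _ => Tlev γ) e ⟨α, hα, s⟩ p q n

include hIH hs hpq hr

lemma ch_good : ∀ n : ℕ,
    ((ch e hα s p q n).fn ∈ Tlev (ch e hα s p q n).lev) ∧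
      Room (ch e hα s p q n).fn (cseq p q n) := by
  intro n
  induction n with
  | zero => exact ⟨hs, hr⟩
  | succ n ih =>
      obtain ⟨hmem, hroom⟩ := ih
      set prev := ch e hα s p q n with hprev
      have hδ : max prev.lev (e n).1 < o := max_lt prev.hlev (e n).2
      have hle : prev.lev ≤ max prev.lev (e n).1 := le_max_left _ _
      have hroom' : Room prev.fn (cseq p q (n + 1)) :=
        hroom.mono (cseq_mono hpq (Nat.le_succ n))
      have hcond : ∃ t, t ∈ Tlev (max prev.lev (e n).1) ∧ res hle t = prev.fn ∧
          Room t (cseq p q (n + 1)) := by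
        obtain ⟨t, ht, h1, h2⟩ := (hIH _ hδ).2.2.2.2 prev.lev hle prev.fn hmem _ hroom'
        exact ⟨t, ht, h1, h2⟩
      have hch : ch e hα s p q (n+1) = ⟨_, hδ, hcond.choose⟩ := by
        show chain _ e _ p q (n+1) = _
        rw [chain]
        simp only [← hprev]
        rw [dif_pos hcond]
      rw [hch]
      exact ⟨hcond.choose_spec.1, hcond.choose_spec.2.2⟩

lemma ch_step : ∀ n : ℕ,
    ∃ hle : (ch e hα s p q n).lev ≤ (ch e hα s p q (n+1)).lev,
      (ch e hα s p q (n+1)).lev = max (ch e hα s p q n).lev (e n).1 ∧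
      res hle (ch e hα s p q (n+1)).fn = (ch e hα s p q n).fn := by
  intro n
  obtain ⟨hmem, hroom⟩ := ch_good hIH e hα s p q hs hpq hr n
  set prev := ch e hα s p q n with hprev
  have hδ : max prev.lev (e n).1 < o := max_lt prev.hlev (e n).2
  have hle : prev.lev ≤ max prev.lev (e n).1 := le_max_left _ _
  have hroom' : Room prev.fn (cseq p q (n + 1)) :=
    hroom.mono (cseq_mono hpq (Nat.le_succ n))
  have hcond : ∃ t, t ∈ Tlev (max prev.lev (e n).1) ∧ res hle t = prev.fn ∧
      Room t (cseq p q (n + 1)) := by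
    obtain ⟨t, ht, h1, h2⟩ := (hIH _ hδ).2.2.2.2 prev.lev hle prev.fn hmem _ hroom'
    exact ⟨t, ht, h1, h2⟩
  have hch : ch e hα s p q (n+1) = ⟨_, hδ, hcond.choose⟩ := by
    show chain _ e _ p q (n+1) = _
    rw [chain]
    simp only [← hprev]
    rw [dif_pos hcond]
  rw [hch]
  exact ⟨hle, rfl, hcond.choose_spec.2.1⟩

lemma ch_mono {m n : ℕ} (hmn : m ≤ n) :
    (ch e hα s p q m).lev ≤ (ch e hα s p q n).lev := by
  induction n with
  | zero => rw [Nat.le_zero.mp hmn]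
  | succ n ih =>
      rcases Nat.le_succ_iff.mp hmn with h | h
      · exact (ih h).trans (ch_step hIH e hα s p q hs hpq hr n).choose
      · rw [h]

lemma ch_coh {m n : ℕ} (hmn : m ≤ n) :
    ∃ hle : (ch e hα s p q m).lev ≤ (ch e hα s p q n).lev,
      res hle (ch e hα s p q n).fn = (ch e hα s p q m).fn := by
  induction n with
  | zero =>
      rw [Nat.le_zero.mp hmn]
      exact ⟨le_refl _, res_refl _⟩
  | succ n ih =>
      rcases Nat.le_succ_iff.mp hmn with h | h
      · obtain ⟨h1, he1⟩ := ih h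
        obtain ⟨h2, _, he2⟩ := ch_step hIH e hα s p q hs hpq hr n
        exact ⟨h1.trans h2, by rw [← he1, ← he2]; rfl⟩
      · rw [h]
        exact ⟨le_refl _, res_refl _⟩


variable (hsurj : Function.Surjective e) (ho : Order.IsSuccLimit o)

include hsurj ho

lemma ch_unbounded (x : Idx o) : ∃ n, x.1 < (ch e hα s p q n).lev := by
  obtain ⟨m, hm⟩ := hsurj ⟨succ x.1, ho.succ_lt x.2⟩
  obtain ⟨hle, heq, -⟩ := ch_step hIH e hα s p q hs hpq hr m
  refine ⟨m + 1, ?_⟩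
  rw [heq, hm]
  exact lt_of_lt_of_le (lt_succ x.1) (le_max_right _ _)

omit hsurj ho

lemma glue_eq (n : ℕ) (x : Idx o) (hx : x.1 < (ch e hα s p q n).lev) :
    glue (ch e hα s p q) x = (ch e hα s p q n).fn ⟨x.1, hx⟩ := by
  have hex : ∃ k, x.1 < (ch e hα s p q k).lev := ⟨n, hx⟩
  rw [glue, dif_pos hex]
  have hN : Nat.find hex ≤ n := Nat.find_min' hex hx
  obtain ⟨hle, hres⟩ := ch_coh hIH e hα s p q hs hpq hr hN
  exact (congrFun hres ⟨x.1, Nat.find_spec hex⟩).symm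

lemma glue_res (n : ℕ) :
    res (le_of_lt (ch e hα s p q n).hlev) (glue (ch e hα s p q)) = (ch e hα s p q n).fn := by
  funext x
  exact glue_eq hIH e hα s p q hs hpq hr n ⟨x.1, lt_of_lt_of_le x.2 (le_of_lt (ch e hα s p q n).hlev)⟩ x.2

include hsurj ho

lemma glue_strictMono : StrictMono (glue (ch e hα s p q)) := by
  intro x y hxy
  obtain ⟨n, hy⟩ := ch_unbounded hIH e hα s p q hs hpq hr hsurj ho y
  have hxy' : x.1 < y.1 := hxy
  have hx : x.1 < (ch e hα s p q n).lev := lt_trans hxy' hy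
  rw [glue_eq hIH e hα s p q hs hpq hr n x hx, glue_eq hIH e hα s p q hs hpq hr n y hy]
  exact (hIH _ (ch e hα s p q n).hlev).2.1 _ (ch_good hIH e hα s p q hs hpq hr n).1
    (show (⟨x.1, hx⟩ : Idx _) < ⟨y.1, hy⟩ from hxy')

lemma glue_room : Room (glue (ch e hα s p q)) q := by
  refine ⟨p + (q - p) / 2, mid_lt hpq, fun x => ?_⟩
  obtain ⟨n, hx⟩ := ch_unbounded hIH e hα s p q hs hpq hr hsurj ho x
  rw [glue_eq hIH e hα s p q hs hpq hr n x hx]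
  obtain ⟨pp, hpp, hb⟩ := (ch_good hIH e hα s p q hs hpq hr n).2
  exact lt_trans (hb _) (lt_trans hpp (cseq_lt_mid hpq n))

lemma glue_resmem (γ : Ordinal) (hγ : γ < o) :
    res (le_of_lt hγ) (glue (ch e hα s p q)) ∈ Tlev γ := by
  obtain ⟨n, hn⟩ := ch_unbounded hIH e hα s p q hs hpq hr hsurj ho ⟨γ, hγ⟩
  have hγn : γ ≤ (ch e hα s p q n).lev := le_of_lt hn
  have : res (le_of_lt hγ) (glue (ch e hα s p q)) = res hγn (ch e hα s p q n).fn := by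
    rw [← glue_res hIH e hα s p q hs hpq hr n]; rfl
  rw [this]
  exact (hIH _ (ch e hα s p q n).hlev).2.2.2.1 γ hγn _ (ch_good hIH e hα s p q hs hpq hr n).1

omit hsurj ho

lemma glue_res0 : res (le_of_lt hα) (glue (ch e hα s p q)) = s :=
  glue_res hIH e hα s p q hs hpq hr 0

end Chain

end AronszajnAux

namespace AronszajnAux

lemma countable_Iio {o : Ordinal} (hω : o < ω₁) : (Set.Iio o).Countable := by
  rw [Cardinal.countable_iff_lt_aleph_one, Ordinal.mk_Iio_ordinal]
  have h1 : o.card < Cardinal.aleph 1 := by rwa [← Cardinal.lt_ord, Cardinal.ord_aleph]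
  simpa using Cardinal.lift_lt.mpr h1

lemma ext1_strictMono {β : Ordinal} {s : Idx β → ℚ} {r : ℚ} (hs : StrictMono s)
    (hr : ∀ γ, s γ < r) : StrictMono (ext1 s r) := by
  intro x y hxy
  have hxy' : x.1 < y.1 := hxy
  unfold ext1
  by_cases hy : y.1 < β
  · rw [dif_pos (lt_trans hxy' hy), dif_pos hy]
    exact hs (show (⟨x.1, lt_trans hxy' hy⟩ : Idx β) < ⟨y.1, hy⟩ from hxy')
  · have hx : x.1 < β := by
      have hyβ : y.1 ≤ β := Order.lt_succ_iff.mp y.2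
      rcases lt_or_eq_of_le hyβ with h | h
      · exact absurd h hy
      · exact lt_of_lt_of_le hxy' (le_of_eq h)
    rw [dif_pos hx, dif_neg hy]
    exact hr _

theorem inv_all : ∀ o : Ordinal, o < ω₁ → Inv o := by
  intro o
  induction o using Ordinal.induction with
  | _ o IH =>
  intro hω
  rcases Ordinal.zero_or_succ_or_isSuccLimit o with h0 | ⟨β, hβ⟩ | hlim
  · -- zero case
    subst h0
    have hT : Tlev 0 = Tzero := Tlev_zero
    refine ⟨?_, ?_, ?_, ?_, ?_⟩
    · rw [hT]; exact Set.countable_singleton _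
    · exact fun s _ x y hxy => absurd x.2 not_lt_zero'
    · exact fun s _ => ⟨1, fun γ => absurd γ.2 not_lt_zero'⟩
    · intro γ h s hs
      obtain rfl := nonpos_iff_eq_zero.mp h
      exact hs
    · intro γ h s hs q hq
      obtain rfl := nonpos_iff_eq_zero.mp h
      exact ⟨s, hs, rfl, hq⟩
  · -- successor case
    subst hβ
    have hβω : β < ω₁ := lt_trans (lt_succ β) hω
    have IHβ : Inv β := IH β (lt_succ β) hβω
    obtain ⟨IHc, IHm, IHb, IHr, IHe⟩ := IHβ
    refine ⟨?_, ?_, ?_, ?_, ?_⟩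
    · rw [Tlev_succ]
      haveI : Countable ↥(Tlev β) := IHc.to_subtype
      refine Set.Countable.mono ?_
        (Set.countable_range (fun x : ↥(Tlev β) × ℚ => ext1 x.1.1 x.2))
      rintro t ⟨s, hs, r, hr, rfl⟩
      exact ⟨(⟨s, hs⟩, r), rfl⟩
    · intro t ht
      rw [Tlev_succ] at ht
      obtain ⟨s, hs, r, hr, rfl⟩ := ht
      exact ext1_strictMono (IHm s hs) hr
    · intro t ht
      rw [Tlev_succ] at ht
      obtain ⟨s, hs, r, hr, rfl⟩ := ht
      obtain ⟨P, hP⟩ := IHb s hs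
      refine ⟨max P (r + 1), fun γ => ?_⟩
      unfold ext1
      by_cases hγ : γ.1 < β
      · rw [dif_pos hγ]; exact lt_of_lt_of_le (hP _) (le_max_left _ _)
      · rw [dif_neg hγ]; exact lt_of_lt_of_le (lt_add_one r) (le_max_right _ _)
    · intro γ h t ht
      rcases lt_or_eq_of_le h with hlt | heq
      · have hγβ : γ ≤ β := Order.lt_succ_iff.mp hlt
        rw [Tlev_succ] at ht
        obtain ⟨s, hs, r, hr, rfl⟩ := ht
        have key : res h (ext1 s r) = res hγβ (res (le_succ β) (ext1 s r)) := rfl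
        rw [key, res_ext1]
        exact IHr γ hγβ s hs
      · subst heq
        exact ht
    · intro γ h s₀ hs₀ q0 hq0
      rcases lt_or_eq_of_le h with hlt | heq
      · have hγβ : γ ≤ β := Order.lt_succ_iff.mp hlt
        obtain ⟨t, ht, hres, p', hp'q, hb⟩ := IHe γ hγβ s₀ hs₀ q0 hq0
        obtain ⟨r, hr1, hr2⟩ := exists_between hp'q
        obtain ⟨p'', hp''1, hp''2⟩ := exists_between hr2
        refine ⟨ext1 t r, ?_, ?_, ⟨p'', hp''2, fun γ' => ?_⟩⟩
        · rw [Tlev_succ]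
          exact ⟨t, ht, r, fun γ' => lt_trans (hb γ') hr1, rfl⟩
        · have key : res h (ext1 t r) = res hγβ (res (le_succ β) (ext1 t r)) := rfl
          rw [key, res_ext1, hres]
        · unfold ext1
          by_cases hγ' : γ'.1 < β
          · rw [dif_pos hγ']
            exact lt_trans (hb _) (lt_trans hr1 hp''1)
          · rw [dif_neg hγ']
            exact hp''1
      · subst heq
        exact ⟨s₀, hs₀, rfl, hq0⟩
  · -- limit case
    have IH' : ∀ γ, γ < o → Inv γ := fun γ hγ => IH γ hγ (lt_trans hγ hω)
    have hT : Tlev o = {u | ∃ (α : Ordinal) (hα : α < o) (s : Idx α → ℚ),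
        s ∈ Tlev α ∧ ∃ p q : ℚ, p < q ∧ Room s (cseq p q 0) ∧
        u = glue (chain (fun γ _ => Tlev γ) (enumIio o hω hlim.ne_bot) ⟨α, hα, s⟩ p q)} := by
      rw [Tlev_limit o hlim]
      unfold Tlim
      rw [dif_pos hω]
    set e := enumIio o hω hlim.ne_bot with he
    have hsurj : Function.Surjective e := enumIio_surj o hω hlim.ne_bot
    refine ⟨?_, ?_, ?_, ?_, ?_⟩
    · rw [hT]
      haveI : Countable ↥(Set.Iio o) := (countable_Iio hω).to_subtype
      haveI : ∀ x : ↥(Set.Iio o), Countable ↥(Tlev x.1) :=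
        fun x => ((IH' x.1 x.2).1).to_subtype
      refine Set.Countable.mono ?_ (Set.countable_range
        (fun w : (Σ x : ↥(Set.Iio o), ↥(Tlev x.1) × (ℚ × ℚ)) =>
          glue (chain (fun γ _ => Tlev γ) e ⟨w.1.1, w.1.2, w.2.1.1⟩ w.2.2.1 w.2.2.2)))
      rintro u ⟨α, hα, s, hs, p, q, h1, h2, rfl⟩
      exact ⟨⟨⟨α, hα⟩, ⟨s, hs⟩, p, q⟩, rfl⟩
    · intro u hu
      rw [hT] at hu
      obtain ⟨α, hα, s, hs, p, q, h1, h2, rfl⟩ := hu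
      exact glue_strictMono IH' e hα s p q hs h1 h2 hsurj hlim
    · intro u hu
      rw [hT] at hu
      obtain ⟨α, hα, s, hs, p, q, h1, h2, rfl⟩ := hu
      obtain ⟨pp, _, hb⟩ := glue_room IH' e hα s p q hs h1 h2 hsurj hlim
      exact ⟨pp, hb⟩
    · intro γ h u hu
      rcases lt_or_eq_of_le h with hlt | heq
      · rw [hT] at hu
        obtain ⟨α, hα, s, hs, p, q, h1, h2, rfl⟩ := hu
        exact glue_resmem IH' e hα s p q hs h1 h2 hsurj hlim γ hlt
      · subst heq
        exact hu
    · intro γ h s₀ hs₀ q0 hq0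
      rcases lt_or_eq_of_le h with hlt | heq
      · obtain ⟨p0, hp0, hb0⟩ := hq0
        have hr : Room s₀ (cseq p0 q0 0) := ⟨p0, cseq_pos0 hp0, hb0⟩
        refine ⟨glue (chain (fun γ' _ => Tlev γ') e ⟨γ, hlt, s₀⟩ p0 q0), ?_, ?_, ?_⟩
        · rw [hT]
          exact ⟨γ, hlt, s₀, hs₀, p0, q0, hp0, hr, rfl⟩
        · exact glue_res0 IH' e hlt s₀ p0 q0 hs₀ hp0 hr
        · exact glue_room IH' e hlt s₀ p0 q0 hs₀ hp0 hr hsurj hlim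
      · subst heq
        exact ⟨s₀, hs₀, rfl, hq0⟩

end AronszajnAux

namespace AronszajnAux

lemma mem_Tlev_zero : (fun _ => (0 : ℚ)) ∈ Tlev 0 := by
  rw [Tlev_zero]; rfl

lemma Tlev_nonempty {o : Ordinal} (hω : o < ω₁) : (Tlev o).Nonempty := by
  obtain ⟨t, ht, -, -⟩ := (inv_all o hω).2.2.2.2 0 zero_le _ mem_Tlev_zero 1
    ⟨0, zero_lt_one, fun γ => absurd γ.2 not_lt_zero'⟩
  exact ⟨t, ht⟩

lemma Tlev_surj {γ o : Ordinal} (hω : o < ω₁) (h : γ ≤ o) {s : Idx γ → ℚ}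
    (hs : s ∈ Tlev γ) : ∃ t ∈ Tlev o, res h t = s := by
  obtain ⟨p, hp⟩ := (inv_all γ (lt_of_le_of_lt h hω)).2.2.1 s hs
  obtain ⟨t, ht, hres, -⟩ := (inv_all o hω).2.2.2.2 γ h s hs (p + 1)
    ⟨p, lt_add_one p, hp⟩
  exact ⟨t, ht, hres⟩

end AronszajnAux

namespace AronszajnAux

open Classical in
/-- The distance on countably many shrinking copies. -/
noncomputable def ddist {Y : Type} (x y : Y × ℕ) : ℝ :=
  if x = y then 0 else if x.2 = y.2 then 1 / (x.2 + 1) else 1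

variable {Y : Type}

lemma ddist_self (x : Y × ℕ) : ddist x x = 0 := if_pos rfl

lemma ddist_nonneg (x y : Y × ℕ) : 0 ≤ ddist x y := by
  unfold ddist; split_ifs <;> positivity

lemma ddist_le_one (x y : Y × ℕ) : ddist x y ≤ 1 := by
  unfold ddist
  split_ifs with h1 h2
  · norm_num
  · rw [div_le_one (by positivity)]
    have : (0:ℝ) ≤ (x.2 : ℝ) := by positivity
    linarith
  · exact le_refl 1

lemma ddist_eq_of_ne {x y : Y × ℕ} (h : x ≠ y) (h2 : x.2 = y.2) :
    ddist x y = 1 / (x.2 + 1) := by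
  unfold ddist; rw [if_neg h, if_pos h2]

lemma ddist_eq_one {x y : Y × ℕ} (h2 : x.2 ≠ y.2) : ddist x y = 1 := by
  have h : x ≠ y := fun he => h2 (by rw [he])
  unfold ddist; rw [if_neg h, if_neg h2]

lemma ddist_comm (x y : Y × ℕ) : ddist x y = ddist y x := by
  rcases eq_or_ne x y with rfl | h
  · rfl
  · rcases eq_or_ne x.2 y.2 with h2 | h2
    · rw [ddist_eq_of_ne h h2, ddist_eq_of_ne h.symm h2.symm, h2]
    · rw [ddist_eq_one h2, ddist_eq_one h2.symm]

lemma ddist_pos_aux (n : ℕ) : (0:ℝ) < 1 / (n + 1) := by positivity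

lemma ddist_triangle (x y z : Y × ℕ) : ddist x z ≤ ddist x y + ddist y z := by
  rcases eq_or_ne x z with rfl | hxz
  · rw [ddist_self]
    exact add_nonneg (ddist_nonneg x y) (ddist_nonneg y x)
  · rcases eq_or_ne x.2 z.2 with h2 | h2
    · rw [ddist_eq_of_ne hxz h2]
      rcases eq_or_ne y x with rfl | hyx
      · rw [ddist_self, zero_add, ddist_eq_of_ne hxz h2]
      · rcases eq_or_ne x.2 y.2 with hy2 | hy2
        · rw [ddist_eq_of_ne (Ne.symm hyx) hy2]
          have := ddist_nonneg y z
          linarith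
        · rw [ddist_eq_one hy2]
          have h1 : (1:ℝ) / (x.2 + 1) ≤ 1 := by
            rw [div_le_one (by positivity)]
            have : (0:ℝ) ≤ (x.2 : ℝ) := by positivity
            linarith
          have := ddist_nonneg y z
          linarith
    · rw [ddist_eq_one h2]
      rcases eq_or_ne x.2 y.2 with hy2 | hy2
      · have hz2 : y.2 ≠ z.2 := fun he => h2 (hy2.trans he)
        rw [ddist_eq_one hz2]
        have := ddist_nonneg x y
        linarith
      · rw [ddist_eq_one hy2]
        have := ddist_nonneg y z
        linarith

lemma ddist_eq_zero_iff {x y : Y × ℕ} : ddist x y = 0 → x = y := by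
  intro h
  by_contra hne
  rcases eq_or_ne x.2 y.2 with h2 | h2
  · rw [ddist_eq_of_ne hne h2] at h
    exact absurd h (ne_of_gt (ddist_pos_aux x.2))
  · rw [ddist_eq_one h2] at h
    norm_num at h

/-- The metric of countably many shrinking copies of `Y`. -/
noncomputable def copyMetric (Y : Type) : MetricSpace (Y × ℕ) :=
  { dist := ddist
    dist_self := ddist_self
    dist_comm := ddist_comm
    dist_triangle := ddist_triangle
    eq_of_dist_eq_zero := ddist_eq_zero_iff }

lemma copyMetric_dist (Y : Type) (x y : Y × ℕ) : (copyMetric Y).dist x y = ddist x y := rfl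

end AronszajnAux

namespace AronszajnAux

lemma copyMetric_complete (Y : Type) :
    @CompleteSpace (Y × ℕ) (copyMetric Y).toUniformSpace := by
  letI := copyMetric Y
  apply Metric.complete_of_cauchySeq_tendsto
  intro u hu
  rw [Metric.cauchySeq_iff] at hu
  obtain ⟨N1, hN1⟩ := hu 1 one_pos
  obtain ⟨N2, hN2⟩ := hu (1/((u N1).2+1)) (ddist_pos_aux (u N1).2)
  set n0 := (u N1).2 with hn0
  set N := max N1 N2 with hN
  have hc : ∀ k, k ≥ N1 → (u k).2 = n0 := by
    intro k hk
    by_contra hne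
    have h1 := hN1 k hk N1 (le_refl _)
    rw [show dist (u k) (u N1) = ddist (u k) (u N1) from rfl, ddist_eq_one hne] at h1
    exact lt_irrefl _ h1
  have hconst : ∀ m, m ≥ N → u m = u N := by
    intro m hm
    by_contra hne
    have h1 : dist (u m) (u N) < 1/(n0+1) :=
      hN2 m (le_trans (le_max_right _ _) hm) N (le_max_right _ _)
    have h2 : (u m).2 = (u N).2 := by
      rw [hc m (le_trans (le_max_left _ _) hm), hc N (le_max_left _ _)]
    rw [show dist (u m) (u N) = ddist (u m) (u N) from rfl, ddist_eq_of_ne hne h2,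
      hc m (le_trans (le_max_left _ _) hm)] at h1
    exact lt_irrefl _ h1
  exact ⟨u N, (tendsto_const_nhds : Filter.Tendsto (fun _ => u N) Filter.atTop _).congr'
    ((Filter.eventually_ge_atTop N).mono fun m hm => (hconst m hm).symm)⟩

lemma copyMetric_separable (Y : Type) [Countable Y] :
    @TopologicalSpace.SeparableSpace (Y × ℕ)
      (copyMetric Y).toUniformSpace.toTopologicalSpace := by
  letI := copyMetric Y
  exact ⟨⟨Set.univ, Set.countable_univ, dense_univ⟩⟩

end AronszajnAux


namespace AronszajnAux

open Ordinal Order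

lemma lev1_lt (α : Omega1) : (Subtype.val α : Ordinal) < ω₁ := Subtype.prop α

/-- The level ordinal of an element of `Omega1`. -/
def lev1 (α : Omega1) : Ordinal := Subtype.val α

lemma levlt (α : Omega1) : lev1 α < ω₁ := Subtype.prop α

lemma le1 {α β : Omega1} (h : α ≤ β) : lev1 α ≤ lev1 β := h

lemma lt1 {α β : Omega1} (h : α < β) : lev1 α < lev1 β := h

lemma le1' {α β : Omega1} (h : lev1 α ≤ lev1 β) : α ≤ β := h

noncomputable def encEx (α : Omega1) :
    ∃ f : ↥(Tlev (lev1 α)) → ℕ, Function.Injective f := by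
  haveI : Countable ↥(Tlev (lev1 α)) := ((inv_all (lev1 α) (levlt α)).1).to_subtype
  exact (countable_iff_exists_injective ↥(Tlev (lev1 α))).mp inferInstance

/-- Coding of the (countable) levels into `ℕ`. -/
noncomputable def enc (α : Omega1) : ↥(Tlev (lev1 α)) → ℕ := (encEx α).choose

lemma enc_inj (α : Omega1) : Function.Injective (enc α) := (encEx α).choose_spec

/-- The set of codes of nodes at level `α`. -/
def NS (α : Omega1) : Set ℕ := Set.range (enc α)

/-- The `α`-th level of the metric tree. -/
def Xt (α : Omega1) : Type := ↥(NS α) × ℕ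

noncomputable def dec (α : Omega1) (x : ↥(NS α)) : ↥(Tlev (lev1 α)) :=
  Set.rangeSplitting (enc α) x

lemma enc_dec (α : Omega1) (x : ↥(NS α)) : enc α (dec α x) = x.1 :=
  Set.apply_rangeSplitting (enc α) x

lemma dec_enc (α : Omega1) (t : ↥(Tlev (lev1 α))) (hmem : enc α t ∈ NS α) :
    dec α ⟨enc α t, hmem⟩ = t :=
  enc_inj α (by rw [enc_dec])

/-- Projection on decoded tree elements. -/
noncomputable def projT {α β : Omega1} (h : α ≤ β) (t : ↥(Tlev (lev1 β))) :
    ↥(Tlev (lev1 α)) :=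
  ⟨res (le1 h) t.1, (inv_all (lev1 β) (levlt β)).2.2.2.1 (lev1 α) (le1 h) _ t.2⟩

lemma projT_comp {α β γ : Omega1} (h1 : α ≤ β) (h2 : β ≤ γ) (t : ↥(Tlev (lev1 γ))) :
    projT h1 (projT h2 t) = projT (h1.trans h2) t := Subtype.ext rfl

lemma projT_refl {α : Omega1} (t : ↥(Tlev (lev1 α))) : projT (le_refl α) t = t :=
  Subtype.ext rfl

/-- Packaging a tree element and a copy index as a point of the metric tree. -/
noncomputable def mk (α : Omega1) (t : ↥(Tlev (lev1 α))) (n : ℕ) : Xt α :=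
  (⟨enc α t, Set.mem_range_self _⟩, n)

lemma mk_snd (α : Omega1) (t : ↥(Tlev (lev1 α))) (n : ℕ) : (mk α t n).2 = n := rfl

lemma dec_mk (α : Omega1) (t : ↥(Tlev (lev1 α))) (n : ℕ) : dec α (mk α t n).1 = t :=
  dec_enc α t _

lemma mk_dec (α : Omega1) (x : Xt α) : mk α (dec α x.1) x.2 = x :=
  Prod.ext (Subtype.ext (enc_dec α x.1)) rfl

/-- The projection maps of the metric tree. -/
noncomputable def projX {α β : Omega1} (h : α ≤ β) (x : Xt β) : Xt α :=
  mk α (projT h (dec β x.1)) x.2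

lemma projX_snd {α β : Omega1} (h : α ≤ β) (x : Xt β) : (projX h x).2 = x.2 := rfl

lemma projX_mk {α β : Omega1} (h : α ≤ β) (t : ↥(Tlev (lev1 β))) (n : ℕ) :
    projX h (mk β t n) = mk α (projT h t) n :=
  congrArg (fun z => mk α (projT h z) n) (dec_enc β t _)

lemma projX_comm {α β γ : Omega1} (h1 : α ≤ β) (h2 : β ≤ γ) (x : Xt γ) :
    projX h1 (projX h2 x) = projX (h1.trans h2) x := by
  conv_lhs => rw [show projX h2 x = mk β (projT h2 (dec γ x.1)) x.2 from rfl]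
  rw [projX_mk, projT_comp]
  rfl

lemma projX_id (α : Omega1) (x : Xt α) : projX (le_refl α) x = x := by
  show mk α (projT (le_refl α) (dec α x.1)) x.2 = x
  rw [projT_refl, mk_dec]

lemma projX_surj {α β : Omega1} (h : α ≤ β) : Function.Surjective (projX h) := by
  intro y
  obtain ⟨t, ht, hres⟩ := Tlev_surj (levlt β) (le1 h) (dec α y.1).2
  refine ⟨mk β ⟨t, ht⟩ y.2, ?_⟩
  rw [projX_mk, show projT h ⟨t, ht⟩ = dec α y.1 from Subtype.ext hres, mk_dec]

lemma projX_contr {α β : Omega1} (h : α ≤ β) (x y : Xt β) :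
    ddist (projX h x) (projX h y) ≤ ddist x y := by
  rcases eq_or_ne (projX h x) (projX h y) with he | hne
  · rw [he, ddist_self (Y := ↥(NS α)) (projX h y)]
    exact ddist_nonneg x y
  · have hxy : x ≠ y := fun he2 => hne (by rw [he2])
    rcases eq_or_ne x.2 y.2 with h2 | h2
    · rw [ddist_eq_of_ne hne h2, ddist_eq_of_ne hxy h2]
      exact le_refl _
    · rw [ddist_eq_one (show (projX h x).2 ≠ (projX h y).2 from h2), ddist_eq_one h2]

/-- The Polish Aronszajn tree. -/
noncomputable def theTree : MetricOmega1Tree where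
  X := Xt
  met α := copyMetric _
  complete α := copyMetric_complete _
  proj h := projX h
  proj_surj h := projX_surj h
  proj_contr h x y := projX_contr h x y
  proj_comm h1 h2 x := projX_comm h1 h2 x
  proj_id α x := projX_id α x

noncomputable def pt (α : Omega1) : ↥(Tlev (lev1 α)) :=
  ⟨(Tlev_nonempty (levlt α)).choose, (Tlev_nonempty (levlt α)).choose_spec⟩

/-- The `n`-th copy ε-branch. -/
noncomputable def branchn (n : ℕ) (α : Omega1) : Xt α :=
  (⟨enc α (pt α), Set.mem_range_self _⟩, n)

lemma ddist_le_of_snd_eq {Y : Type} {x y : Y × ℕ} (h : x.2 = y.2) :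
    ddist x y ≤ 1 / (x.2 + 1) := by
  rcases eq_or_ne x y with rfl | hne
  · rw [ddist_self]
    exact le_of_lt (ddist_pos_aux x.2)
  · rw [ddist_eq_of_ne hne h]

lemma succ_mem_Omega1 (α : Omega1) : succ (lev1 α) < ω₁ :=
  (Cardinal.isSuccLimit_omega 1).succ_lt (levlt α)

/-- The successor level. -/
noncomputable def succOm (α : Omega1) : Omega1 := ⟨succ (lev1 α), succ_mem_Omega1 α⟩

lemma le_succOm {α β : Omega1} (h : α < β) : succOm α ≤ succOm β :=
  le1' (succ_le_succ (le_of_lt (lt1 h)))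

end AronszajnAux

/-- there is a Polish Aronszajn tree (a metric ω₁-tree with separable levels and
no cofinal branch) which has an ε-branch for every ε > 0. -/
theorem exists_polish_aronszajn_tree_with_epsBranches :
    ∃ T : MetricOmega1Tree,
      (∀ α : Omega1, @TopologicalSpace.SeparableSpace (T.X α)
        (T.met α).toUniformSpace.toTopologicalSpace) ∧
      (∀ ε : ℝ, 0 < ε → ∃ x : ∀ α, T.X α, T.IsEpsBranch ε x) ∧
      ¬ ∃ x : ∀ α, T.X α, T.IsBranch x := by
  classical
  refine ⟨AronszajnAux.theTree, ?_, ?_, ?_⟩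
  · intro α
    exact AronszajnAux.copyMetric_separable _
  · intro ε hε
    obtain ⟨n, hn⟩ := exists_nat_one_div_lt hε
    refine ⟨fun α => AronszajnAux.mk α (AronszajnAux.pt α) n, ?_⟩
    intro α β
    refine le_trans (AronszajnAux.ddist_le_of_snd_eq rfl) (le_of_lt ?_)
    exact hn
  · rintro ⟨x, hx⟩
    open AronszajnAux in
    let t : ∀ α : Omega1, ↥(Tlev (lev1 α)) := fun α => dec α (x α).1
    have coh : ∀ {α β : Omega1} (h : α ≤ β), projT h (t β) = t α := by
      intro α β h
      have h1 : dec α (AronszajnAux.mk α (projT h (dec β (x β).1)) (x β).2).1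
          = dec α (x α).1 := congrArg (fun z : Xt α => dec α z.1) (hx h)
      rwa [dec_mk] at h1
    let F : Omega1 → ℚ := fun γ => (t (succOm γ)).1 ⟨lev1 γ, lt_succ (lev1 γ)⟩
    have Fmono : ∀ {γ δ : Omega1}, γ < δ → F γ < F δ := by
      intro γ δ hγδ
      have h1 : succOm γ ≤ succOm δ := le_succOm hγδ
      have hc : res (le1 h1) (t (succOm δ)).1 = (t (succOm γ)).1 :=
        congrArg Subtype.val (coh h1)
      have hF : F γ = (t (succOm δ)).1
          ⟨lev1 γ, lt_of_lt_of_le (lt_succ (lev1 γ)) (le1 h1)⟩ :=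
        (congrFun hc ⟨lev1 γ, lt_succ (lev1 γ)⟩).symm
      rw [hF]
      exact (inv_all (lev1 (succOm δ)) (levlt _)).2.1 _ (t (succOm δ)).2
        (Subtype.mk_lt_mk.mpr (lt1 hγδ))
    have Finj : Function.Injective F := by
      intro a b hab
      rcases lt_trichotomy a b with h | h | h
      · exact absurd hab (ne_of_lt (Fmono h))
      · exact h
      · exact absurd hab.symm (ne_of_lt (Fmono h))
    haveI : Countable Omega1 := Finj.countable
    haveI : Nonempty Omega1 := ⟨⟨0, omega_pos 1⟩⟩
    obtain ⟨g, hg⟩ := exists_surjective_nat Omega1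
    have ho' : iSup (fun k => lev1 (g k)) < ω₁ := by
      exact Ordinal.iSup_lt_omega_one (fun k => levlt (g k))
    have hsucc : succ (iSup (fun k => lev1 (g k))) < ω₁ := (Cardinal.isSuccLimit_omega 1).succ_lt ho'
    obtain ⟨k, hk⟩ := hg ⟨succ (iSup (fun k => lev1 (g k))), hsucc⟩
    have h1 : lev1 (g k) = succ (iSup (fun k => lev1 (g k))) := congrArg lev1 hk
    have h2 : lev1 (g k) ≤ iSup (fun k => lev1 (g k)) :=
      Ordinal.le_iSup (fun k => lev1 (g k)) k
    rw [h1] at h2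
    exact absurd h2 (not_le.mpr (lt_succ _))
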